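/- If F is an S-strongly flat R-module, then the localization F_S = F ⊗_R R_S is a projective R_S-module. -/

import Mathlib

open CategoryTheory

section StronglyFlatHelpers

variable {R : Type} [CommRing R]

lemma subsingleton_iff_isZero (M : ModuleCat R) : Subsingleton M ↔ Limits.IsZero M := by
  constructor
  · intro h; exact ModuleCat.isZero_of_subsingleton M
  · intro h
    have h0 : (𝟙 M : M ⟶ M) = 0 := h.eq_of_src _ _
    refine ⟨fun a b => ?_⟩
    have ha : a = (𝟙 M : M ⟶ M).hom a := rfl
    have hb : b = (𝟙 M : M ⟶ M).hom b := rfl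
    rw [ha, hb, h0]; rfl

lemma ext1_iff_of_resolution (X Y : ModuleCat R) (P : ProjectiveResolution X) :
    Subsingleton (((Ext R (ModuleCat R) 1).obj (Opposite.op X)).obj Y) ↔
      ∀ f : P.complex.X 1 ⟶ Y, P.complex.d 2 1 ≫ f = 0 →
        ∃ g : P.complex.X 0 ⟶ Y, P.complex.d 1 0 ≫ g = f := by
  have e : (((Ext R (ModuleCat R) 1).obj (Opposite.op X)).obj Y) ≅
      (P.complex.linearYonedaObj R Y).homology 1 := P.isoExt 1 Y
  have h1 : Limits.IsZero (((Ext R (ModuleCat R) 1).obj (Opposite.op X)).obj Y) ↔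
      Limits.IsZero ((P.complex.linearYonedaObj R Y).homology 1) :=
    ⟨fun h => Limits.IsZero.of_iso h e.symm, fun h => Limits.IsZero.of_iso h e⟩
  rw [subsingleton_iff_isZero, h1,
    ← HomologicalComplex.exactAt_iff_isZero_homology,
    HomologicalComplex.exactAt_iff' _ 0 1 2 (by simp) (by simp),
    ShortComplex.moduleCat_exact_iff]
  constructor
  · intro h f hf
    obtain ⟨g, hg⟩ := h f hf
    exact ⟨g, hg⟩
  · intro h f hf
    obtain ⟨g, hg⟩ := h f hf
    exact ⟨g, hg⟩

lemma sec_of_ext1 (X E : ModuleCat R) (q : E ⟶ X) (hq : Function.Surjective q)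
    (hext : Subsingleton (((Ext R (ModuleCat R) 1).obj (Opposite.op X)).obj
      (ModuleCat.of R (LinearMap.ker q.hom)))) :
    ∃ s : X →ₗ[R] E, q.hom ∘ₗ s = LinearMap.id := by
  haveI : Epi q := (ModuleCat.epi_iff_surjective q).2 hq
  set P := projectiveResolution X with hP
  let π₀ : P.complex.X 0 ⟶ X := P.π.f 0
  have hπsurj : Function.Surjective π₀ :=
    (ModuleCat.epi_iff_surjective (P.π.f 0)).1 inferInstance
  let p : P.complex.X 0 ⟶ E := Projective.factorThru π₀ q
  have hp : p ≫ q = π₀ := Projective.factorThru_comp _ _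
  have hp' : ∀ w, q (p w) = π₀ w := fun w => congrArg (fun (f : _ ⟶ X) => f w) hp
  have hdπ : ∀ y, π₀ (P.complex.d 1 0 y) = 0 := fun y =>
    congrArg (fun (f : _ ⟶ X) => f y) P.complex_d_comp_π_f_zero
  have hexact0 : ∀ w, π₀ w = 0 → ∃ y, P.complex.d 1 0 y = w := by
    have := P.exact₀
    rw [ShortComplex.moduleCat_exact_iff] at this
    exact this
  -- κ
  have hκmem : ∀ y, p (P.complex.d 1 0 y) ∈ LinearMap.ker q.hom := fun y => by
    simp only [LinearMap.mem_ker]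
    rw [hp', hdπ]
  let κ : P.complex.X 1 ⟶ ModuleCat.of R (LinearMap.ker q.hom) :=
    ModuleCat.ofHom (LinearMap.codRestrict _ (p.hom ∘ₗ (P.complex.d 1 0).hom) hκmem)
  have hκ : P.complex.d 2 1 ≫ κ = 0 := by
    apply ModuleCat.hom_ext; apply LinearMap.ext; intro z
    apply Subtype.ext
    show p (P.complex.d 1 0 (P.complex.d 2 1 z)) = 0
    have : P.complex.d 1 0 (P.complex.d 2 1 z) = 0 := by
      exact LinearMap.congr_fun (congrArg ModuleCat.Hom.hom (P.complex.d_comp_d 2 1 0)) z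
    rw [this, map_zero]
  obtain ⟨g, hg⟩ := (ext1_iff_of_resolution X _ P).1 hext κ hκ
  have hg' : ∀ y, g (P.complex.d 1 0 y) = κ y := fun y => LinearMap.congr_fun (congrArg ModuleCat.Hom.hom hg) y
  -- t
  let t : P.complex.X 0 →ₗ[R] E :=
    p.hom - (LinearMap.ker q.hom).subtype ∘ₗ g.hom
  have ht : LinearMap.ker π₀.hom ≤ LinearMap.ker t := by
    intro w hw
    obtain ⟨y, rfl⟩ := hexact0 w hw
    have hv : (g (P.complex.d 1 0 y)).1 = p (P.complex.d 1 0 y) :=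
      (congrArg Subtype.val (hg' y)).trans rfl
    show p (P.complex.d 1 0 y) - (g (P.complex.d 1 0 y)).1 = 0
    rw [hv, sub_self]
  let sbar : (P.complex.X 0 : Type) ⧸ LinearMap.ker π₀.hom →ₗ[R] E :=
    Submodule.liftQ _ t ht
  let eq : ((P.complex.X 0 : Type) ⧸ LinearMap.ker π₀.hom) ≃ₗ[R] X :=
    LinearMap.quotKerEquivOfSurjective _ hπsurj
  refine ⟨sbar ∘ₗ (eq.symm : X →ₗ[R] _), ?_⟩
  apply LinearMap.ext; intro x
  obtain ⟨w, rfl⟩ := hπsurj x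
  have heqw : eq.symm (π₀ w) = Submodule.Quotient.mk w := by
    apply eq.injective
    rw [LinearEquiv.apply_symm_apply]
    rfl
  simp only [LinearMap.coe_comp, Function.comp_apply, LinearMap.id_apply, LinearEquiv.coe_coe]
  rw [heqw]
  show q (t w) = π₀ w
  have hz : q ((g w).1) = 0 := (g w).2
  have : t w = p w - (g w).1 := rfl
  rw [this, map_sub, hz, hp', sub_zero]

lemma sLocal_weaklyCotorsion (S : Submonoid R) (K : ModuleCat R)
    (hK : ∀ s : S, Function.Bijective (fun k : K => (s : R) • k)) :
    Subsingleton (((Ext R (ModuleCat R) 1).obj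
      (Opposite.op (ModuleCat.of R (Localization S)))).obj K) := by
  classical
  set A : ModuleCat R := ModuleCat.of R (Localization S) with hA0
  -- bijectivity of the action of s on the localization
  have hA : ∀ s : S, Function.Bijective (fun a : Localization S => (s : R) • a) := by
    intro s
    obtain ⟨u, hu⟩ := IsLocalization.map_units (Localization S) s
    constructor
    · intro a b hab
      simp only [Algebra.smul_def, ← hu] at hab
      exact (Units.mul_right_inj u).1 hab
    · intro a
      refine ⟨(u⁻¹ : _) * a, ?_⟩
      simp only [Algebra.smul_def, ← hu, ← mul_assoc, Units.mul_inv, one_mul]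
  set P := projectiveResolution A with hP
  rw [ext1_iff_of_resolution A K P]
  intro f hf21
  let π₀ : P.complex.X 0 ⟶ A := P.π.f 0
  have hπsurj : Function.Surjective π₀ :=
    (ModuleCat.epi_iff_surjective (P.π.f 0)).1 inferInstance
  have hdπ : ∀ y, π₀ (P.complex.d 1 0 y) = 0 := fun y =>
    LinearMap.congr_fun (congrArg ModuleCat.Hom.hom P.complex_d_comp_π_f_zero) y
  have hexact0 : ∀ w, π₀ w = 0 → ∃ y, P.complex.d 1 0 y = w := by
    have h := P.exact₀
    rw [ShortComplex.moduleCat_exact_iff] at h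
    exact h
  have hexact1 : ∀ x, P.complex.d 1 0 x = 0 → ∃ z, P.complex.d 2 1 z = x := by
    have h := P.exact_succ 0
    rw [ShortComplex.moduleCat_exact_iff] at h
    exact h
  have hker : ∀ y, P.complex.d 1 0 y = 0 → f y = 0 := by
    intro y hy
    obtain ⟨z, rfl⟩ := hexact1 y hy
    exact LinearMap.congr_fun (congrArg ModuleCat.Hom.hom hf21) z
  -- the pushout extension E
  let d10 : P.complex.X 1 →ₗ[R] P.complex.X 0 := (P.complex.d 1 0).hom
  let W : Submodule R ((P.complex.X 0 : Type) × K) :=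
    LinearMap.range (LinearMap.prod d10 (-f.hom))
  let E := ((P.complex.X 0 : Type) × K) ⧸ W
  let mk : ((P.complex.X 0 : Type) × K) →ₗ[R] E := W.mkQ
  let j : K →ₗ[R] E := mk ∘ₗ LinearMap.inr R _ _
  let c : (P.complex.X 0 : Type) →ₗ[R] E := mk ∘ₗ LinearMap.inl R _ _
  have hmem : ∀ v : (P.complex.X 0 : Type) × K, v ∈ W ↔
      ∃ y, d10 y = v.1 ∧ -(f y) = v.2 := by
    intro v
    constructor
    · rintro ⟨y, rfl⟩
      exact ⟨y, rfl, rfl⟩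
    · rintro ⟨y, h1, h2⟩
      exact ⟨y, Prod.ext h1 h2⟩
  have hmkeq : ∀ v w : (P.complex.X 0 : Type) × K, mk v = mk w ↔ v - w ∈ W := by
    intro v w
    simp only [mk, Submodule.mkQ_apply]
    exact Submodule.Quotient.eq W
  have hmk0 : ∀ v : (P.complex.X 0 : Type) × K, mk v = 0 ↔ v ∈ W := by
    intro v
    simp only [mk, Submodule.mkQ_apply]
    exact Submodule.Quotient.mk_eq_zero W
  have hjc : ∀ y, c (d10 y) = j (f y) := by
    intro y
    show mk (d10 y, 0) = mk (0, f y)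
    rw [hmkeq]
    refine ⟨y, Prod.ext ?_ ?_⟩
    · show d10 y = d10 y - 0
      rw [sub_zero]
    · show -(f y) = 0 - f y
      rw [zero_sub]
  have hW : W ≤ LinearMap.ker (π₀.hom ∘ₗ
      LinearMap.fst R (P.complex.X 0 : Type) K) := by
    rintro v ⟨y, rfl⟩
    simp only [LinearMap.mem_ker, LinearMap.coe_comp, Function.comp_apply]
    exact hdπ y
  let ρ : E →ₗ[R] Localization S := W.liftQ _ hW
  have hρc : ∀ x, ρ (c x) = π₀ x := fun x => rfl
  have hρj : ∀ k : K, ρ (j k) = 0 := by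
    intro k
    show π₀ 0 = 0
    simp
  have hjinj : Function.Injective j := by
    rw [injective_iff_map_eq_zero]
    intro k hk
    have hw : ((0 : (P.complex.X 0 : Type)), k) ∈ W := (hmk0 _).1 hk
    obtain ⟨y, h1, h2⟩ := (hmem _).1 hw
    have h1' : d10 y = 0 := h1
    have h2' : -(f y) = k := h2
    have : f y = 0 := hker y h1'
    rw [← h2', this, neg_zero]
  have hkerρ : ∀ e : E, ρ e = 0 → ∃ k, j k = e := by
    intro e he
    obtain ⟨⟨x, k⟩, rfl⟩ := Submodule.mkQ_surjective W e
    have hx : π₀ x = 0 := he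
    obtain ⟨y, hy⟩ := hexact0 x hx
    refine ⟨k + f y, ?_⟩
    show mk (0, k + f y) = mk (x, k)
    rw [hmkeq]
    refine (hmem _).2 ⟨-y, ?_, ?_⟩
    · show d10 (-y) = 0 - x
      rw [map_neg]
      show -(P.complex.d 1 0 y) = 0 - x
      rw [hy, zero_sub]
    · show -(f (-y)) = k + f y - k
      rw [map_neg, neg_neg, add_sub_cancel_left]
  -- s acts bijectively on E
  have hszero : ∀ (s : S) (e : E), (s : R) • e = 0 → e = 0 := by
    intro s e he
    obtain ⟨⟨x, k⟩, rfl⟩ := Submodule.mkQ_surjective W e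
    have hw : ((s : R) • x, (s : R) • k) ∈ W := by
      rw [← hmk0]
      show mk ((s : R) • (x, k)) = 0
      rw [map_smul]
      exact he
    obtain ⟨y, h1', h2'⟩ := (hmem _).1 hw
    have h1 : d10 y = (s : R) • x := h1'
    have h2 : -(f y) = (s : R) • k := h2'
    have hπx : π₀ x = 0 := by
      have h3 : (s : R) • π₀ x = 0 := by
        rw [← map_smul, ← h1]
        exact hdπ y
      have h5 := (hA s).1 (a₁ := π₀ x) (a₂ := 0)
        (by simpa using h3)
      simpa using h5
    obtain ⟨y', hy'⟩ := hexact0 x hπx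
    have hz : d10 ((s : R) • y' - y) = 0 := by
      simp only [map_sub, map_smul, hy', h1, sub_self, d10]
    have hfz : f ((s : R) • y' - y) = 0 := hker _ hz
    have hfy : f y = (s : R) • f y' := by
      have h6 := hfz
      rw [map_sub, map_smul, sub_eq_zero] at h6
      exact h6.symm
    have hk : k = -(f y') := by
      have h4 : (s : R) • k = -((s : R) • f y') := by rw [← hfy, ← h2]
      have h5 : (s : R) • k = (s : R) • (-(f y')) := by rw [h4, smul_neg]
      exact (hK s).1 h5
    show mk (x, k) = 0
    exact (hmk0 _).2 ((hmem _).2 ⟨y', hy', by rw [hk]⟩)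
  have hs : ∀ s : S, Function.Bijective (fun e : E => (s : R) • e) := by
    intro s
    constructor
    · intro e1 e2 h12
      have : (s : R) • (e1 - e2) = 0 := by
        rw [smul_sub, sub_eq_zero]
        exact h12
      have := hszero s _ this
      rwa [sub_eq_zero] at this
    · intro e
      obtain ⟨⟨x, k⟩, rfl⟩ := Submodule.mkQ_surjective W e
      obtain ⟨a, ha⟩ := (hA s).2 (π₀ x)
      obtain ⟨x', hx'⟩ := hπsurj a
      have hπ : π₀ (x - (s : R) • x') = 0 := by
        simp only [map_sub, map_smul, hx', ha, sub_self]
      obtain ⟨y, hy⟩ := hexact0 _ hπ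
      obtain ⟨k₂, hk₂⟩ := (hK s).2 (k + f y)
      refine ⟨mk (x', k₂), ?_⟩
      show (s : R) • mk (x', k₂) = mk (x, k)
      rw [← map_smul, hmkeq]
      refine (hmem _).2 ⟨-y, ?_, ?_⟩
      · show d10 (-y) = (s : R) • x' - x
        rw [map_neg, hy]
        abel
      · show -(f (-y)) = (s : R) • k₂ - k
        rw [map_neg, neg_neg]
        have : (s : R) • k₂ = k + f y := hk₂
        rw [this]
        abel
  have hEunits : ∀ s : S, IsUnit ((algebraMap R (Module.End R E)) (s : R)) := by
    intro s
    rw [Module.End.isUnit_iff]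
    have h7 : ⇑((algebraMap R (Module.End R E)) (s : R)) = fun e : E => (s : R) • e :=
      funext fun e => by simp [Module.algebraMap_end_apply]
    rw [h7]
    exact hs s
  have hAunits : ∀ s : S, IsUnit ((algebraMap R (Module.End R (Localization S))) (s : R)) := by
    intro s
    rw [Module.End.isUnit_iff]
    have h8 : ⇑((algebraMap R (Module.End R (Localization S))) (s : R)) =
        fun a : Localization S => (s : R) • a :=
      funext fun a => by simp [Module.algebraMap_end_apply]
    rw [h8]
    exact hA s
  obtain ⟨x₀, hx₀⟩ := hπsurj (1 : Localization S)
  let u : R →ₗ[R] E := LinearMap.toSpanSingleton R E (c x₀)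
  let σ : Localization S →ₗ[R] E :=
    IsLocalizedModule.lift S (Algebra.linearMap R (Localization S)) u hEunits
  have hσ : ∀ r : R, σ (algebraMap R (Localization S) r) = r • c x₀ := by
    intro r
    exact IsLocalizedModule.lift_apply S (Algebra.linearMap R (Localization S)) u hEunits r
  have hρσ : ρ ∘ₗ σ = LinearMap.id := by
    apply IsLocalizedModule.ext S (Algebra.linearMap R (Localization S)) hAunits
    apply LinearMap.ext
    intro r
    simp only [LinearMap.coe_comp, Function.comp_apply, Algebra.linearMap_apply,
      LinearMap.id_apply]
    rw [hσ, map_smul, hρc, hx₀, Algebra.algebraMap_eq_smul_one]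
  have hρσ' : ∀ a, ρ (σ a) = a := fun a => LinearMap.congr_fun hρσ a
  let τ : (P.complex.X 0 : Type) →ₗ[R] E := c - σ ∘ₗ π₀.hom
  have hτρ : ∀ x, ρ (τ x) = 0 := by
    intro x
    show ρ (c x - σ (π₀ x)) = 0
    rw [map_sub, hρc, hρσ', sub_self]
  have hrange : ∀ x, τ x ∈ LinearMap.range j := by
    intro x
    obtain ⟨k, hk⟩ := hkerρ (τ x) (hτρ x)
    exact ⟨k, hk⟩
  let eqv : K ≃ₗ[R] LinearMap.range j := LinearEquiv.ofInjective j hjinj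
  let g : P.complex.X 0 ⟶ K :=
    ModuleCat.ofHom ((eqv.symm : LinearMap.range j →ₗ[R] K) ∘ₗ LinearMap.codRestrict _ τ hrange)
  refine ⟨g, ?_⟩
  apply ModuleCat.hom_ext; apply LinearMap.ext
  intro y
  show (eqv.symm ⟨τ (d10 y), hrange _⟩ : K) = f y
  apply hjinj
  have hjsymm : ∀ w : LinearMap.range j, j (eqv.symm w) = (w : E) := by
    intro w
    have := congrArg (Subtype.val) (eqv.apply_symm_apply w)
    exact this
  rw [hjsymm]
  show τ (d10 y) = j (f y)
  have : τ (d10 y) = c (d10 y) - σ (π₀ (d10 y)) := rfl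
  rw [this, hdπ y, map_zero, sub_zero, hjc]

lemma ext1_subsingleton_congr (X : ModuleCat R) {Y Z : ModuleCat R} (e : Y ≅ Z)
    (h : Subsingleton (((Ext R (ModuleCat R) 1).obj (Opposite.op X)).obj Y)) :
    Subsingleton (((Ext R (ModuleCat R) 1).obj (Opposite.op X)).obj Z) := by
  have hiso : (((Ext R (ModuleCat R) 1).obj (Opposite.op X)).obj Y) ≅
      (((Ext R (ModuleCat R) 1).obj (Opposite.op X)).obj Z) :=
    ((Ext R (ModuleCat R) 1).obj (Opposite.op X)).mapIso e
  haveI := h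
  have hz : Limits.IsZero (((Ext R (ModuleCat R) 1).obj (Opposite.op X)).obj Y) :=
    ModuleCat.isZero_of_subsingleton _
  have hz2 := Limits.IsZero.of_iso hz hiso.symm
  have h0 : (𝟙 (((Ext R (ModuleCat R) 1).obj (Opposite.op X)).obj Z) :
      _ ⟶ _) = 0 := hz2.eq_of_src _ _
  refine ⟨fun a b => ?_⟩
  have ha : a = (𝟙 (((Ext R (ModuleCat R) 1).obj (Opposite.op X)).obj Z) : _ ⟶ _).hom a := rfl
  have hb : b = (𝟙 (((Ext R (ModuleCat R) 1).obj (Opposite.op X)).obj Z) : _ ⟶ _).hom b := rfl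
  rw [ha, hb, h0]; rfl

lemma loc_smul_bijective (S : Submonoid R) (T : Type) [AddCommGroup T] [Module R T]
    [Module (Localization S) T] [IsScalarTower R (Localization S) T] (s : S) :
    Function.Bijective (fun t : T => (s : R) • t) := by
  obtain ⟨u, hu⟩ := IsLocalization.map_units (Localization S) s
  have key : ∀ t : T, (s : R) • t = u • t := by
    intro t
    rw [← algebraMap_smul (Localization S) (s : R) t, ← hu]
    rfl
  constructor
  · intro a b h
    have h' : (s : R) • a = (s : R) • b := h
    rw [key, key] at h'
    exact MulAction.injective u h'
  · intro t
    refine ⟨u⁻¹ • t, ?_⟩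
    show (s : R) • (u⁻¹ • t) = t
    rw [key, smul_smul, mul_inv_cancel, one_smul]


end StronglyFlatHelpers

noncomputable def ext1Zero (R : Type) [CommRing R] (M N : Type) [AddCommGroup M] [Module R M]
    [AddCommGroup N] [Module R N] : Prop :=
  Subsingleton (((Ext R (ModuleCat R) 1).obj (Opposite.op (ModuleCat.of R M))).obj
    (ModuleCat.of R N))

/-- An `R`-module `C` is `S`-weakly cotorsion if `Ext¹_R(R_S, C) = 0`. -/
noncomputable def SWeaklyCotorsion (R : Type) [CommRing R] (S : Submonoid R) (C : Type)
    [AddCommGroup C] [Module R C] : Prop :=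
  ext1Zero R (Localization S) C

/-- An `R`-module `F` is `S`-strongly flat if `Ext¹_R(F, C) = 0` for every
`S`-weakly cotorsion `R`-module `C`. -/
noncomputable def SStronglyFlat (R : Type) [CommRing R] (S : Submonoid R) (F : Type)
    [AddCommGroup F] [Module R F] : Prop :=
  ∀ (C : Type) [AddCommGroup C] [Module R C], SWeaklyCotorsion R S C → ext1Zero R F C

theorem stmt_7 (R : Type) [CommRing R] (S : Submonoid R)
    (F : Type) [AddCommGroup F] [Module R F] (hF : SStronglyFlat R S F) :
    Module.Projective (Localization S) (LocalizedModule S F) := by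
  classical
  set A := Localization S
  set M := LocalizedModule S F
  set P := (M →₀ A) with hPdef
  -- the free cover
  let q : P →ₗ[A] M := Finsupp.linearCombination A id
  have hqsurj : Function.Surjective q :=
    Finsupp.linearCombination_surjective A Function.surjective_id
  let q' : P →ₗ[R] M := LinearMap.restrictScalars R q
  have hq'surj : Function.Surjective q' := hqsurj
  -- bijectivity of S-action
  have hPbij : ∀ s : S, Function.Bijective (fun t : P => (s : R) • t) :=
    fun s => loc_smul_bijective S P s
  have hMbij : ∀ s : S, Function.Bijective (fun t : M => (s : R) • t) :=
    fun s => loc_smul_bijective S M s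
  have hPunits : ∀ s : S, IsUnit ((algebraMap R (Module.End R P)) (s : R)) := by
    intro s
    rw [Module.End.isUnit_iff]
    have h7 : ⇑((algebraMap R (Module.End R P)) (s : R)) = fun t : P => (s : R) • t :=
      funext fun t => by simp [Module.algebraMap_end_apply]
    rw [h7]; exact hPbij s
  have hMunits : ∀ s : S, IsUnit ((algebraMap R (Module.End R M)) (s : R)) := by
    intro s
    rw [Module.End.isUnit_iff]
    have h7 : ⇑((algebraMap R (Module.End R M)) (s : R)) = fun t : M => (s : R) • t :=
      funext fun t => by simp [Module.algebraMap_end_apply]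
    rw [h7]; exact hMbij s
  -- the kernel, S-weakly cotorsion
  set KK := LinearMap.ker q' with hKK
  have hKbij : ∀ s : S, Function.Bijective (fun k : KK => (s : R) • k) := by
    intro s
    constructor
    · intro a b h
      apply Subtype.ext
      exact (hPbij s).1 (congrArg Subtype.val h)
    · intro k
      obtain ⟨x, hx0⟩ := (hPbij s).2 (k : P)
      have hx : (s : R) • x = (k : P) := hx0
      have hxK : x ∈ KK := by
        have h1 : q' ((s : R) • x) = 0 := by rw [hx]; exact k.2
        have h2 : (s : R) • q' x = 0 := by rw [← map_smul]; exact h1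
        have := (hMbij s).1 (a₁ := q' x) (a₂ := 0) (by simpa using h2)
        simpa [hKK] using this
      exact ⟨⟨x, hxK⟩, Subtype.ext hx⟩
  have hwc : SWeaklyCotorsion R S KK := by
    show Subsingleton _
    exact sLocal_weaklyCotorsion S (ModuleCat.of R KK) hKbij
  have hext : ext1Zero R F KK := hF KK hwc
  -- the pullback
  let ι : F →ₗ[R] M := LocalizedModule.mkLinearMap S F
  let E' : Submodule R (F × P) :=
    LinearMap.ker (ι ∘ₗ LinearMap.fst R F P - q' ∘ₗ LinearMap.snd R F P)
  have hE'mem : ∀ v : F × P, v ∈ E' ↔ ι v.1 = q' v.2 := by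
    intro v
    simp only [E', LinearMap.mem_ker, LinearMap.sub_apply, LinearMap.coe_comp,
      Function.comp_apply, LinearMap.fst_apply, LinearMap.snd_apply, sub_eq_zero]
  let pr : (E' : Type) →ₗ[R] F := LinearMap.fst R F P ∘ₗ E'.subtype
  have hprsurj : Function.Surjective pr := by
    intro x
    obtain ⟨e, he⟩ := hq'surj (ι x)
    exact ⟨⟨(x, e), (hE'mem _).2 he.symm⟩, rfl⟩
  -- identify ker pr with KK
  let prm : ModuleCat.of R (E' : Type) ⟶ ModuleCat.of R F := ModuleCat.ofHom pr
  let fwd : KK →ₗ[R] LinearMap.ker prm.hom := by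
    refine LinearMap.codRestrict _ (LinearMap.codRestrict E'
      (LinearMap.prod 0 KK.subtype) ?_) ?_
    · intro k
      refine (hE'mem _).2 ?_
      show ι 0 = q' (k : P)
      rw [map_zero]
      exact k.2.symm
    · intro k
      rfl
  have hfwdinj : Function.Injective fwd := by
    intro a b h
    apply Subtype.ext
    exact congrArg (fun w => w.1.1.2) h
  have hfwdsurj : Function.Surjective fwd := by
    intro w
    have h1 : (w.1.1 : F × P).1 = 0 := w.2
    have h2 : (w.1.1 : F × P).2 ∈ KK := by
      have h3 := (hE'mem _).1 w.1.2
      rw [h1, map_zero] at h3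
      exact LinearMap.mem_ker.2 h3.symm
    refine ⟨⟨_, h2⟩, ?_⟩
    apply Subtype.ext
    apply Subtype.ext
    show ((0 : F), (w.1.1 : F × P).2) = (w.1.1 : F × P)
    exact Prod.ext h1.symm rfl
  let eqv : KK ≃ₗ[R] LinearMap.ker prm.hom :=
    LinearEquiv.ofBijective fwd ⟨hfwdinj, hfwdsurj⟩
  have hext2 : Subsingleton (((Ext R (ModuleCat R) 1).obj
      (Opposite.op (ModuleCat.of R F))).obj
      (ModuleCat.of R (LinearMap.ker prm.hom))) :=
    ext1_subsingleton_congr _ (eqv.toModuleIso) hext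
  obtain ⟨s0, hs0⟩ := sec_of_ext1 (ModuleCat.of R F) (ModuleCat.of R (E' : Type)) prm
    hprsurj hext2
  have hs0' : ∀ x : F, pr (s0 x) = x := fun x => LinearMap.congr_fun hs0 x
  -- φ : F →ₗ[R] P with q' ∘ φ = ι
  let φ : F →ₗ[R] P := LinearMap.snd R F P ∘ₗ E'.subtype ∘ₗ s0
  have hφ : ∀ x, q' (φ x) = ι x := by
    intro x
    have h1 := (hE'mem _).1 (s0 x).2
    have h2 : (s0 x).1.1 = x := hs0' x
    show q' (s0 x).1.2 = ι x
    rw [← h1, h2]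
  -- lift to σ : M →ₗ[R] P
  let σ : M →ₗ[R] P := LocalizedModule.lift S φ hPunits
  have hσφ : ∀ x : F, σ (ι x) = φ x := fun x =>
    LinearMap.congr_fun (LocalizedModule.lift_comp S φ hPunits) x
  have hqσ : ∀ m : M, q' (σ m) = m := by
    have huniq : q' ∘ₗ σ = LinearMap.id := by
      apply IsLocalizedModule.ext S (LocalizedModule.mkLinearMap S F) hMunits
      apply LinearMap.ext
      intro x
      show q' (σ (ι x)) = ι x
      rw [hσφ, hφ]
    exact fun m => LinearMap.congr_fun huniq m
  -- upgrade σ to A-linearity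
  have hσA : ∀ (a : A) (m : M), σ (a • m) = a • σ m := by
    intro a m
    obtain ⟨⟨r, t⟩, hrt⟩ := IsLocalization.mk'_surjective S a
    apply (hPbij t).1
    show (t : R) • σ (a • m) = (t : R) • (a • σ m)
    have key : ∀ (T : Type) (_ : AddCommGroup T) (_ : Module R T) (_ : Module A T)
        (_ : IsScalarTower R A T) (v : T), (t : R) • (a • v) = r • v := by
      intro T _ _ _ _ v
      rw [← smul_assoc]
      have h9 : (t : R) • a = algebraMap R A r := by
        rw [Algebra.smul_def, ← hrt, mul_comm, IsLocalization.mk'_spec]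
      rw [h9, algebraMap_smul]
    rw [← map_smul, key M inferInstance inferInstance inferInstance inferInstance m,
      key P inferInstance inferInstance inferInstance inferInstance (σ m), map_smul]
  let σA : M →ₗ[A] P :=
    { toFun := σ
      map_add' := σ.map_add
      map_smul' := hσA }
  exact Module.Projective.of_split σA q (by
    apply LinearMap.ext
    intro m
    exact hqσ m)
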